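/- For any nonzero vector v ∈ 𝔽₂^N (N = 2ⁿ) with smallest nonzero coordinate index i, the Hamming weight of v·P_n is at least w(g_i) = 2^{w(i)}, where g_i is row i of P_n. -/

import Mathlib

open Matrix Finset

/-- The 2×2 polar kernel `P = [[1,0],[1,1]]` over GF(2). -/
def Pmat : Matrix (Fin 2) (Fin 2) (ZMod 2) := !![1, 0; 1, 1]

/-- The polar transform `P_n = P^{⊗n}`, the n-fold Kronecker power of `Pmat`. -/
def polarP : (n : ℕ) → Matrix (Fin (2 ^ n)) (Fin (2 ^ n)) (ZMod 2)
  | 0 => 1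
  | n + 1 =>
    Matrix.reindex (finProdFinEquiv.trans (finCongr (by ring)))
      (finProdFinEquiv.trans (finCongr (by ring)))
      (Matrix.kroneckerMap (· * ·) Pmat (polarP n))

lemma sum_digits_two (m : ℕ) : (Nat.digits 2 m).sum = m % 2 + (Nat.digits 2 (m / 2)).sum := by
  rcases Nat.eq_zero_or_pos m with rfl | hm
  · simp
  · rw [Nat.digits_def' (by norm_num : 1 < 2) hm]; simp

lemma sum_digits_split : ∀ (n b a : ℕ), a < 2 → b < 2 ^ n →
    (Nat.digits 2 (b + 2 ^ n * a)).sum = (Nat.digits 2 b).sum + a := by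
  intro n
  induction n with
  | zero =>
    intro b a ha hb
    interval_cases b
    interval_cases a <;> simp
  | succ n ih =>
    intro b a ha hb
    interval_cases a
    · simp
    · have hp : 2 ^ (n+1) = 2 * 2^n := by ring
      rw [sum_digits_two (b + 2 ^ (n+1) * 1), sum_digits_two b]
      have h1 : (b + 2 ^ (n+1) * 1) % 2 = b % 2 := by omega
      have h2 : (b + 2 ^ (n+1) * 1) / 2 = b / 2 + 2 ^ n * 1 := by omega
      rw [h1, h2, ih (b/2) 1 (by norm_num) (by omega)]
      ring

lemma hammingNorm_add_le {ι : Type*} [Fintype ι] (x y : ι → ZMod 2) :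
    hammingNorm (x + y) ≤ hammingNorm x + hammingNorm y := by
  classical
  refine le_trans (Finset.card_le_card ?_) (Finset.card_union_le _ _)
  intro i hi
  simp only [Finset.mem_filter, Finset.mem_union, Finset.mem_univ, true_and, Pi.add_apply] at *
  by_contra h
  push_neg at h
  rw [h.1, h.2, add_zero] at hi
  exact hi rfl

lemma hammingNorm_le_add {ι : Type*} [Fintype ι] (x y : ι → ZMod 2) :
    hammingNorm x ≤ hammingNorm (x + y) + hammingNorm y := by
  have : x = (x + y) + y := by
    ext i; simp [add_assoc, CharTwo.add_self_eq_zero]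
  calc hammingNorm x = hammingNorm ((x + y) + y) := by rw [← this]
    _ ≤ _ := hammingNorm_add_le _ _

lemma hammingNorm_comp_equiv {ι κ : Type*} [Fintype ι] [Fintype κ] [DecidableEq ι] [DecidableEq κ]
    (e : ι ≃ κ) (x : κ → ZMod 2) : hammingNorm (x ∘ e) = hammingNorm x := by
  simp only [hammingNorm]
  exact Finset.card_bij' (fun i _ => e i) (fun k _ => e.symm k) (by simp) (by simp) (by simp) (by simp)

lemma hammingNorm_prod {N : ℕ} (u : Fin 2 × Fin N → ZMod 2) :
    hammingNorm u = hammingNorm (fun d => u (0,d)) + hammingNorm (fun d => u (1,d)) := by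
  simp only [hammingNorm, Finset.card_filter]
  rw [Fintype.sum_prod_type, Fin.sum_univ_two]

def polarE (n : ℕ) : Fin 2 × Fin (2 ^ n) ≃ Fin (2 ^ (n+1)) :=
  finProdFinEquiv.trans (finCongr (by ring))

lemma polarE_val (n : ℕ) (a : Fin 2) (b : Fin (2 ^ n)) :
    ((polarE n) (a, b)).val = b.val + 2 ^ n * a.val := rfl

lemma polarP_succ (n : ℕ) :
    polarP (n+1) = Matrix.reindex (polarE n) (polarE n)
      (Matrix.kroneckerMap (· * ·) Pmat (polarP n)) := rfl

lemma vecMul_reindex {m k : Type*} [Fintype m] [Fintype k] [DecidableEq m] [DecidableEq k]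
    (e : m ≃ k) (M : Matrix m m (ZMod 2)) (v : k → ZMod 2) :
    v ᵥ* (Matrix.reindex e e M) = fun c => ((v ∘ e) ᵥ* M) (e.symm c) := by
  ext c
  simp only [Matrix.vecMul, dotProduct, Matrix.reindex_apply, Matrix.submatrix_apply,
    Function.comp_apply]
  rw [← Equiv.sum_comp e (fun j => v j * M (e.symm j) (e.symm c))]
  simp

lemma kron_vecMul {N : ℕ} (B : Matrix (Fin N) (Fin N) (ZMod 2)) (w : Fin 2 × Fin N → ZMod 2)
    (c : Fin 2) (d : Fin N) :
    (w ᵥ* Matrix.kroneckerMap (· * ·) Pmat B) (c, d) =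
      if c = 0 then (((fun b => w (0,b)) + fun b => w (1,b)) ᵥ* B) d
      else ((fun b => w (1,b)) ᵥ* B) d := by
  fin_cases c <;>
    simp [Matrix.vecMul, dotProduct, Matrix.kroneckerMap, Fintype.sum_prod_type,
      Fin.sum_univ_two, Pmat, Finset.sum_add_distrib, add_mul]

lemma polarP_succ_row_norm (n : ℕ) (a : Fin 2) (b : Fin (2 ^ n)) :
    hammingNorm (polarP (n+1) (polarE n (a, b))) =
      (if a = 0 then 1 else 2) * hammingNorm (polarP n b) := by
  have hrow : polarP (n+1) (polarE n (a, b)) =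
      (fun q => Matrix.kroneckerMap (· * ·) Pmat (polarP n) (a, b) q) ∘ (polarE n).symm := by
    rw [polarP_succ]
    ext k
    simp [Matrix.reindex_apply, Matrix.submatrix_apply]
  rw [hrow, hammingNorm_comp_equiv (polarE n).symm, hammingNorm_prod]
  have h0 : (fun d => Matrix.kroneckerMap (· * ·) Pmat (polarP n) (a, b) (0, d)) = polarP n b := by
    ext d
    show Pmat a 0 * polarP n b d = _
    fin_cases a <;> simp [Pmat]
  have h1 : (fun d => Matrix.kroneckerMap (· * ·) Pmat (polarP n) (a, b) (1, d)) =
      (if a = 0 then 0 else polarP n b) := by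
    ext d
    show Pmat a 1 * polarP n b d = _
    fin_cases a <;> simp [Pmat]
  rw [h0, h1]
  fin_cases a <;> simp [hammingNorm_zero] <;> ring

lemma hammingNorm_one_row {N : ℕ} (i : Fin N) :
    hammingNorm ((1 : Matrix (Fin N) (Fin N) (ZMod 2)) i) = 1 := by
  have h : ((1 : Matrix (Fin N) (Fin N) (ZMod 2)) i) = fun k => if k = i then 1 else 0 := by
    ext k; simp [Matrix.one_apply, eq_comm]
  rw [h, hammingNorm]
  rw [show ({k | (if k = i then (1 : ZMod 2) else 0) ≠ 0} : Finset (Fin N)) = {i} from ?_]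
  · simp
  · ext k
    by_cases hk : k = i <;> simp [hk]

lemma polarP_row_norm : ∀ (n : ℕ) (i : Fin (2 ^ n)),
    hammingNorm (polarP n i) = 2 ^ ((Nat.digits 2 i.val).sum) := by
  intro n
  induction n with
  | zero =>
    intro i
    have hval : i.val = 0 := by have := i.isLt; simp [pow_zero] at this; omega
    rw [show polarP 0 = 1 from rfl, hammingNorm_one_row, hval]
    simp
  | succ n ih =>
    intro i
    obtain ⟨⟨a, b⟩, rfl⟩ := (polarE n).surjective i
    rw [polarP_succ_row_norm, ih b, polarE_val,
      sum_digits_split n b.val a.val a.isLt b.isLt, pow_add]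
    fin_cases a <;> simp <;> ring

lemma polarP_bound : ∀ (n : ℕ) (v : Fin (2 ^ n) → ZMod 2) (i : Fin (2 ^ n)),
    v i ≠ 0 → (∀ j : Fin (2 ^ n), j < i → v j = 0) →
    hammingNorm (polarP n i) ≤ hammingNorm (v ᵥ* polarP n) := by
  intro n
  induction n with
  | zero =>
    intro v i hvi _
    rw [show polarP 0 = 1 from rfl, hammingNorm_one_row, Matrix.vecMul_one]
    have : v ≠ 0 := fun h => hvi (by rw [h]; rfl)
    exact Nat.one_le_iff_ne_zero.mpr (hammingNorm_ne_zero_iff.mpr this)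
  | succ n ih =>
    intro v i hvi hmin
    obtain ⟨⟨a, b⟩, rfl⟩ := (polarE n).surjective i
    set e := polarE n with he
    set B := polarP n with hB
    set v0 : Fin (2 ^ n) → ZMod 2 := fun d => v (e (0, d)) with hv0
    set v1 : Fin (2 ^ n) → ZMod 2 := fun d => v (e (1, d)) with hv1
    have hnorm : hammingNorm (v ᵥ* polarP (n+1)) =
        hammingNorm ((v0 + v1) ᵥ* B) + hammingNorm (v1 ᵥ* B) := by
      rw [polarP_succ, vecMul_reindex]
      rw [show (fun c => ((v ∘ e) ᵥ* Matrix.kroneckerMap (· * ·) Pmat B) (e.symm c)) =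
          ((v ∘ e) ᵥ* Matrix.kroneckerMap (· * ·) Pmat B) ∘ e.symm from rfl]
      rw [hammingNorm_comp_equiv, hammingNorm_prod]
      congr 1
      · congr 1
        ext d
        rw [kron_vecMul]
        simp
        rfl
      · congr 1
        ext d
        rw [kron_vecMul]
        simp
        rfl
    rw [hnorm, polarP_succ_row_norm]
    rcases (by decide : ∀ x : Fin 2, x = 0 ∨ x = 1) a with rfl | rfl
    · -- a = 0
      rw [if_pos rfl, one_mul]
      have hb0 : v0 b ≠ 0 := hvi
      have hminb : ∀ d : Fin (2 ^ n), d < b → v0 d = 0 := by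
        intro d hd
        apply hmin
        rw [Fin.lt_def, polarE_val, polarE_val]
        simpa using hd
      have h1 := ih v0 b hb0 hminb
      have h2 : hammingNorm (v0 ᵥ* B) ≤
          hammingNorm ((v0 + v1) ᵥ* B) + hammingNorm (v1 ᵥ* B) := by
        have hsum : (v0 + v1) ᵥ* B = v0 ᵥ* B + v1 ᵥ* B := Matrix.add_vecMul _ _ _
        rw [hsum]
        exact hammingNorm_le_add _ _
      exact le_trans h1 h2
    · -- a = 1
      rw [if_neg (by decide : (1 : Fin 2) ≠ 0)]
      have hv0z : v0 = 0 := by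
        ext d
        apply hmin
        rw [Fin.lt_def, polarE_val, polarE_val]
        have := d.isLt
        simp
        omega
      have hb1 : v1 b ≠ 0 := hvi
      have hminb : ∀ d : Fin (2 ^ n), d < b → v1 d = 0 := by
        intro d hd
        apply hmin
        rw [Fin.lt_def, polarE_val, polarE_val]
        simpa using hd
      have h1 := ih v1 b hb1 hminb
      rw [hv0z, zero_add, ← hB]
      omega


/-- For a nonzero vector `v` with least nonzero coordinate index `i`, the weight
of `v·P_n` is at least `w(g_i) = 2^{w(i)}`. -/
theorem vecMul_polarP_weight_lower_bound (n : ℕ) (v : Fin (2 ^ n) → ZMod 2)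
    (i : Fin (2 ^ n)) (hvi : v i ≠ 0) (hmin : ∀ j : Fin (2 ^ n), j < i → v j = 0) :
    hammingNorm (polarP n i) ≤ hammingNorm (v ᵥ* polarP n) ∧
    hammingNorm (polarP n i) = 2 ^ ((Nat.digits 2 i.val).sum) := by
  exact ⟨polarP_bound n v i hvi hmin, polarP_row_norm n i⟩
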